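/- Reciprocal minors on the Grassmann necklace: for every a ∈ ℤ, writing I→_a = {i_1 ≺_a ⋯ ≺_a i_k} as a subset of {a, …, a+n−1}, one has det(τ→(A)_{i_1}, …, τ→(A)_{i_k}) · det(A_{i_1}, …, A_{i_k}) = 1. -/

import Mathlib

open scoped BigOperators

/-- The columns of `A` are `n`-periodic. -/
def ColPeriodic (k n : ℕ) (A : ℤ → Fin k → ℂ) : Prop :=
  ∀ a : ℤ, A (a + (n : ℤ)) = A a

/-- `A` has rank `k`, i.e. its columns span `ℂ^k`. -/
def FullRank (k : ℕ) (A : ℤ → Fin k → ℂ) : Prop :=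
  Submodule.span ℂ (Set.range A) = ⊤

/-- The Gale (componentwise) partial order on finite subsets of `ℤ` of equal
cardinality: `B ≼ C` iff they have the same cardinality and, for each `i`, the
`i`-th smallest element of `B` is at most the `i`-th smallest element of `C`
(equivalently, the counting condition below). -/
def galeLE (B C : Finset ℤ) : Prop :=
  B.card = C.card ∧
    ∀ t : ℤ, (B.filter fun x => t ≤ x).card ≤ (C.filter fun x => t ≤ x).card

/-- The columns of `A` indexed by `J` form a basis of `ℂ^k`. -/
def IsColBasis (k : ℕ) (A : ℤ → Fin k → ℂ) (J : Finset ℤ) : Prop :=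
  J.card = k ∧ LinearIndependent ℂ (fun j : (J : Set ℤ) => A (j : ℤ)) ∧
    Submodule.span ℂ (A '' (J : Set ℤ)) = ⊤

/-- `I` is the `≼_a`-minimal `k`-element subset of `{a, a+1, …, a+n-1}` whose
columns form a basis of `ℂ^k` (the `a`-minimal basis `I→_a`). -/
def IsMinBasis (k n : ℕ) (A : ℤ → Fin k → ℂ) (a : ℤ) (I : Finset ℤ) : Prop :=
  I ⊆ Finset.Ico a (a + (n : ℤ)) ∧ IsColBasis k A I ∧
    ∀ J : Finset ℤ, J ⊆ Finset.Ico a (a + (n : ℤ)) → IsColBasis k A J → galeLE I J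

/-- `I` is the `≼_{a+1}`-maximal `k`-element subset of `{a-n+1, …, a}` whose
columns form a basis of `ℂ^k` (the `a`-maximal basis `I←_a`).  Note that on
representatives in `{a-n+1, …, a}` the cyclic order `≺_{a+1}` agrees with the
usual order of `ℤ`. -/
def IsMaxBasis (k n : ℕ) (A : ℤ → Fin k → ℂ) (a : ℤ) (I : Finset ℤ) : Prop :=
  I ⊆ Finset.Ioc (a - (n : ℤ)) a ∧ IsColBasis k A I ∧
    ∀ J : Finset ℤ, J ⊆ Finset.Ioc (a - (n : ℤ)) a → IsColBasis k A J → galeLE J I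

/-- The standard symmetric bilinear form `⟨x|y⟩ = ∑ i, x i * y i` on `ℂ^k`. -/
noncomputable def bil (k : ℕ) (x y : Fin k → ℂ) : ℂ := ∑ i, x i * y i

/-- `π` is the bounded affine permutation of `A`:
`π a` is the least `r` with `a ≤ r ≤ a + n` and `A a ∈ span(A (a+1), …, A r)`. -/
def IsBAP (k n : ℕ) (A : ℤ → Fin k → ℂ) (π : ℤ → ℤ) : Prop :=
  ∀ a : ℤ,
    a ≤ π a ∧ π a ≤ a + (n : ℤ) ∧
    A a ∈ Submodule.span ℂ (A '' Set.Ioc a (π a)) ∧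
    ∀ r : ℤ, a ≤ r → r ≤ a + (n : ℤ) →
      A a ∈ Submodule.span ℂ (A '' Set.Ioc a r) → π a ≤ r

/-- `T` is the right twist `τ→(A)`: for each `a`, the column `T a` pairs to `1`
with `A a` and to `0` with the other columns of the `a`-minimal basis. -/
def IsRightTwist (k n : ℕ) (A T : ℤ → Fin k → ℂ) : Prop :=
  ∀ (a : ℤ) (I : Finset ℤ), IsMinBasis k n A a I →
    ∀ b ∈ I, bil k (T a) (A b) = if b = a then 1 else 0

/-- `T` is the left twist `τ←(A)`: for each `a`, the column `T a` pairs to `1`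
with `A a` and to `0` with the other columns of the `a`-maximal basis. -/
def IsLeftTwist (k n : ℕ) (A T : ℤ → Fin k → ℂ) : Prop :=
  ∀ (a : ℤ) (I : Finset ℤ), IsMaxBasis k n A a I →
    ∀ b ∈ I, bil k (T a) (A b) = if b = a then 1 else 0

/-- `Δ_I(A)`, where `I = {i 0 < i 1 < ⋯ < i (k-1)}` is given by a strictly
monotone enumeration `i : Fin k → ℤ`: the determinant of the `k×k` matrix with
columns `A (i 0), …, A (i (k-1))`. -/
noncomputable def Delta (k : ℕ) (A : ℤ → Fin k → ℂ) (i : Fin k → ℤ) : ℂ :=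
  Matrix.det (Matrix.of fun r s : Fin k => A (i s) r)

section Part1
namespace TwistAux

variable {k n : ℕ} {A : ℤ → Fin k → ℂ}

lemma per_mul (hper : ColPeriodic k n A) (q a : ℤ) : A (a + q * (n : ℤ)) = A a := by
  induction q using Int.induction_on with
  | zero => simp
  | succ q ih =>
    have h := hper (a + q * (n : ℤ))
    have : a + (q + 1) * (n : ℤ) = a + q * (n : ℤ) + (n : ℤ) := by ring
    rw [this, h, ih]
  | pred q ih =>
    have h := hper (a + (-(q + 1)) * (n : ℤ))
    have e : a + (-(q + 1)) * (n : ℤ) + (n : ℤ) = a + (-q) * (n : ℤ) := by ring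
    rw [e] at h
    have e2 : a + (-(q:ℤ) - 1) * (n : ℤ) = a + (-((q:ℤ) + 1)) * (n : ℤ) := by ring
    rw [e2, ← h]
    exact ih

lemma span_window (hn : 0 < n) (hper : ColPeriodic k n A) (hrank : FullRank k A) (b : ℤ) :
    Submodule.span ℂ (A '' Set.Ico b (b + (n : ℤ))) = ⊤ := by
  refine le_antisymm le_top ?_
  rw [← hrank]
  refine Submodule.span_le.mpr (fun x hx => ?_)
  obtain ⟨m, rfl⟩ := hx
  have hn' : (0 : ℤ) < (n : ℤ) := by exact_mod_cast hn
  set r : ℤ := (m - b) % (n : ℤ) with hr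
  have hr0 : 0 ≤ r := Int.emod_nonneg _ (ne_of_gt hn')
  have hrn : r < (n : ℤ) := Int.emod_lt_of_pos _ hn'
  have key : A (b + r) = A m := by
    have h1 := per_mul hper ((m - b) / (n : ℤ)) (b + r)
    have h2 : b + r + ((m - b) / (n : ℤ)) * (n : ℤ) = m := by
      have := Int.emod_add_mul_ediv (m - b) (n : ℤ)
      rw [hr]; linarith [this]
    rw [h2] at h1
    exact h1.symm
  exact Submodule.subset_span ⟨b + r, ⟨by linarith, by linarith⟩, key⟩

end TwistAux
end Part1

section Part2
namespace TwistAux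

variable {k n : ℕ} {A : ℤ → Fin k → ℂ}

open Classical in
noncomputable def greedy (A : ℤ → Fin k → ℂ) (n : ℕ) (b : ℤ) : Finset ℤ :=
  (Finset.Ico b (b + (n : ℤ))).filter fun c => A c ∉ Submodule.span ℂ (A '' Set.Ico b c)

lemma mem_greedy {b c : ℤ} :
    c ∈ greedy A n b ↔
      (b ≤ c ∧ c < b + (n : ℤ)) ∧ A c ∉ Submodule.span ℂ (A '' Set.Ico b c) := by
  classical
  simp [greedy, Finset.mem_filter, Finset.mem_Ico]

lemma greedy_subset (b : ℤ) : greedy A n b ⊆ Finset.Ico b (b + (n : ℤ)) := by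
  classical
  exact Finset.filter_subset _ _

lemma greedy_span_prefix (b : ℤ) :
    ∀ m : ℕ, ∀ c : ℤ, b ≤ c → c < b + (n : ℤ) → (c - b).toNat = m →
      A c ∈ Submodule.span ℂ (A '' {d : ℤ | d ∈ greedy A n b ∧ d ≤ c}) := by
  intro m
  induction m using Nat.strong_induction_on with
  | _ m ih =>
    intro c hbc hcn hm
    by_cases hg : c ∈ greedy A n b
    · exact Submodule.subset_span ⟨c, ⟨hg, le_refl c⟩, rfl⟩
    · have hc : A c ∈ Submodule.span ℂ (A '' Set.Ico b c) := by
        by_contra h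
        exact hg (mem_greedy.mpr ⟨⟨hbc, hcn⟩, h⟩)
      refine Submodule.span_le.mpr ?_ hc
      rintro x ⟨d, hd, rfl⟩
      have hdm : ((d - b).toNat < m) := by
        have h1 : b ≤ d := hd.1
        have h2 : d < c := hd.2
        omega
      have hmem := ih (d - b).toNat hdm d hd.1 (lt_trans hd.2 hcn) rfl
      refine Submodule.span_mono (Set.image_mono ?_) hmem
      rintro e ⟨he, hec⟩
      exact ⟨he, le_trans hec (le_of_lt hd.2)⟩

lemma indep_of_notMem_span_lt (f : ℤ → Fin k → ℂ) (S : Finset ℤ)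
    (h : ∀ c ∈ S, f c ∉ Submodule.span ℂ (f '' {d : ℤ | d ∈ S ∧ d < c})) :
    LinearIndependent ℂ (fun j : (S : Set ℤ) => f (j : ℤ)) := by
  classical
  induction S using Finset.strongInduction with
  | _ S ih =>
    rcases S.eq_empty_or_nonempty with rfl | hS
    · rw [Finset.coe_empty]
      exact linearIndependent_empty_type
    · set m := S.max' hS with hmdef
      have hm : m ∈ S := S.max'_mem hS
      have hins : (S : Set ℤ) = insert m ((S.erase m : Finset ℤ) : Set ℤ) := by
        rw [Finset.coe_erase, Set.insert_diff_singleton, Set.insert_eq_self.mpr (Finset.mem_coe.mpr hm)]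
      have hnot : (m : ℤ) ∉ ((S.erase m : Finset ℤ) : Set ℤ) := by simp
      rw [hins]
      refine (linearIndepOn_insert (f := f) hnot).mpr ?_
      constructor
      · refine ih (S.erase m) (Finset.erase_ssubset hm) (fun c hc => ?_)
        have hh := h c (Finset.mem_of_mem_erase hc)
        refine fun hmem => hh (Submodule.span_mono (Set.image_mono ?_) hmem)
        rintro d ⟨hd, hdc⟩
        exact ⟨Finset.mem_of_mem_erase hd, hdc⟩
      · have hh := h m hm
        refine fun hmem => hh (Submodule.span_mono (Set.image_mono ?_) hmem)
        intro d hd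
        refine ⟨Finset.mem_of_mem_erase hd, ?_⟩
        exact lt_of_le_of_ne (S.le_max' d (Finset.mem_of_mem_erase hd)) (Finset.ne_of_mem_erase hd)

lemma greedy_indep (b : ℤ) :
    LinearIndependent ℂ (fun j : ((greedy A n b : Finset ℤ) : Set ℤ) => A (j : ℤ)) := by
  refine indep_of_notMem_span_lt A (greedy A n b) (fun c hc => ?_)
  have hcs := mem_greedy.mp hc
  refine fun hmem => hcs.2 (Submodule.span_mono (Set.image_mono ?_) hmem)
  rintro d ⟨hd, hdc⟩
  exact ⟨(mem_greedy.mp hd).1.1, hdc⟩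

end TwistAux
end Part2

section Part3
namespace TwistAux

variable {k n : ℕ} {A : ℤ → Fin k → ℂ}

open Module Submodule

lemma indep_mono {S T : Finset ℤ} (hTS : (T : Set ℤ) ⊆ (S : Set ℤ))
    (hS : LinearIndependent ℂ (fun j : (S : Set ℤ) => A (j : ℤ))) :
    LinearIndependent ℂ (fun j : (T : Set ℤ) => A (j : ℤ)) :=
  hS.comp (Set.inclusion hTS) (Set.inclusion_injective hTS)

lemma card_eq_finrank_span {S T : Finset ℤ} (hTS : (T : Set ℤ) ⊆ (S : Set ℤ))
    (hS : LinearIndependent ℂ (fun j : (S : Set ℤ) => A (j : ℤ))) :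
    T.card = finrank ℂ (span ℂ (A '' (T : Set ℤ))) := by
  have hT := indep_mono hTS hS
  have h := finrank_span_eq_card hT
  rw [← Set.image_eq_range] at h
  rw [h]
  simp

lemma greedy_span_inter (b t : ℤ) (ht : t ≤ b + (n : ℤ)) :
    span ℂ (A '' Set.Ico b t) ≤
      span ℂ (A '' ((greedy A n b ∩ Finset.Ico b t : Finset ℤ) : Set ℤ)) := by
  refine span_le.mpr ?_
  rintro x ⟨c, hc, rfl⟩
  have hmem := greedy_span_prefix (A := A) b (c - b).toNat c hc.1 (lt_of_lt_of_le hc.2 ht) rfl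
  refine Submodule.span_mono (Set.image_mono ?_) hmem
  rintro d ⟨hd, hdc⟩
  simp only [Finset.coe_inter, Set.mem_inter_iff, Finset.mem_coe, Finset.mem_Ico]
  exact ⟨hd, (mem_greedy.mp hd).1.1, lt_of_le_of_lt hdc hc.2⟩

lemma greedy_span_top (hn : 0 < n) (hper : ColPeriodic k n A) (hrank : FullRank k A) (b : ℤ) :
    span ℂ (A '' ((greedy A n b : Finset ℤ) : Set ℤ)) = ⊤ := by
  refine le_antisymm le_top ?_
  rw [← span_window hn hper hrank b]
  have h := greedy_span_inter (A := A) b (b + (n : ℤ)) (le_refl _)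
  rwa [Finset.inter_eq_left.mpr (greedy_subset b)] at h

lemma greedy_card (hn : 0 < n) (hper : ColPeriodic k n A) (hrank : FullRank k A) (b : ℤ) :
    (greedy A n b).card = k := by
  have hind := greedy_indep (A := A) (n := n) b
  have hsp : ⊤ ≤ span ℂ (Set.range fun j : ((greedy A n b : Finset ℤ) : Set ℤ) => A (j : ℤ)) := by
    rw [← Set.image_eq_range, greedy_span_top hn hper hrank b]
  have h1 := Module.finrank_eq_card_basis (Basis.mk hind hsp)
  rw [Module.finrank_fin_fun] at h1
  simpa using h1.symm

lemma greedy_colBasis (hn : 0 < n) (hper : ColPeriodic k n A) (hrank : FullRank k A) (b : ℤ) :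
    IsColBasis k A (greedy A n b) :=
  ⟨greedy_card hn hper hrank b, greedy_indep b, greedy_span_top hn hper hrank b⟩

lemma filter_card_eq (S : Finset ℤ) (b e t : ℤ) (hS : S ⊆ Finset.Ico b e) :
    (S.filter fun x => t ≤ x).card + (S ∩ Finset.Ico b t).card = S.card := by
  classical
  have h : S ∩ Finset.Ico b t = S.filter fun x => ¬ t ≤ x := by
    ext x
    simp only [Finset.mem_inter, Finset.mem_Ico, Finset.mem_filter, not_le]
    constructor
    · rintro ⟨hx, _, hxt⟩; exact ⟨hx, hxt⟩
    · rintro ⟨hx, hxt⟩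
      exact ⟨hx, (Finset.mem_Ico.mp (hS hx)).1, hxt⟩
  rw [h]
  exact Finset.card_filter_add_card_filter_not _

lemma greedy_isMinBasis (hn : 0 < n) (hper : ColPeriodic k n A) (hrank : FullRank k A) (b : ℤ) :
    IsMinBasis k n A b (greedy A n b) := by
  refine ⟨greedy_subset b, greedy_colBasis hn hper hrank b, ?_⟩
  intro J hJsub hJ
  have hGcard := greedy_card hn hper hrank b
  refine ⟨by rw [hGcard, hJ.1], ?_⟩
  intro t
  have hG := filter_card_eq (greedy A n b) b (b + (n : ℤ)) t (greedy_subset b)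
  have hJf := filter_card_eq J b (b + (n : ℤ)) t hJsub
  have hkey : (J ∩ Finset.Ico b t).card ≤ ((greedy A n b) ∩ Finset.Ico b t).card := by
    by_cases ht : t ≤ b + (n : ℤ)
    · -- rank argument
      have h1 : (J ∩ Finset.Ico b t).card ≤ finrank ℂ (span ℂ (A '' Set.Ico b t)) := by
        rw [card_eq_finrank_span (T := J ∩ Finset.Ico b t) (S := J)
          (by rw [Finset.coe_inter]; exact Set.inter_subset_left) hJ.2.1]
        refine Submodule.finrank_mono (Submodule.span_mono (Set.image_mono ?_))
        intro x hx
        simp only [Finset.coe_inter, Set.mem_inter_iff, Finset.mem_coe, Finset.mem_Ico] at hx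
        exact ⟨hx.2.1, hx.2.2⟩
      have h2 : finrank ℂ (span ℂ (A '' Set.Ico b t)) ≤
          ((greedy A n b) ∩ Finset.Ico b t).card := by
        rw [card_eq_finrank_span (T := greedy A n b ∩ Finset.Ico b t) (S := greedy A n b)
          (by rw [Finset.coe_inter]; exact Set.inter_subset_left) (greedy_indep b)]
        exact Submodule.finrank_mono (greedy_span_inter b t ht)
      exact le_trans h1 h2
    · push_neg at ht
      have hJe : J ∩ Finset.Ico b t = J := Finset.inter_eq_left.mpr
        (fun x hx => Finset.mem_Ico.mpr ⟨(Finset.mem_Ico.mp (hJsub hx)).1,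
          lt_trans (Finset.mem_Ico.mp (hJsub hx)).2 ht⟩)
      have hGe : (greedy A n b) ∩ Finset.Ico b t = greedy A n b := Finset.inter_eq_left.mpr
        (fun x hx => Finset.mem_Ico.mpr ⟨(Finset.mem_Ico.mp (greedy_subset b hx)).1,
          lt_trans (Finset.mem_Ico.mp (greedy_subset b hx)).2 ht⟩)
      rw [hJe, hGe, hGcard, hJ.1]
  have hJk := hJ.1
  omega

end TwistAux
end Part3

section Part4
namespace TwistAux

variable {k n : ℕ} {A : ℤ → Fin k → ℂ}

open Module Submodule

lemma minBasis_not_mem_span {a : ℤ} {I : Finset ℤ} (hI : IsMinBasis k n A a I)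
    {c : ℤ} (hc : c ∈ I) :
    A c ∉ Submodule.span ℂ (A '' Set.Ico a c) := by
  classical
  obtain ⟨hsub, ⟨hcard, hind, hspan⟩, hmin⟩ := hI
  intro hcspan
  -- A c not in span of the other columns of I
  have hcins : (I : Set ℤ) = insert c ((I.erase c : Finset ℤ) : Set ℤ) := by
    rw [Finset.coe_erase, Set.insert_diff_singleton,
      Set.insert_eq_self.mpr (Finset.mem_coe.mpr hc)]
  have hcnot : (c : ℤ) ∉ ((I.erase c : Finset ℤ) : Set ℤ) := by simp
  have hind' := hind
  rw [hcins] at hind'; replace hind' := (linearIndepOn_insert (f := A) hcnot).mp hind'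
  obtain ⟨hindE, hAcW⟩ := hind'
  set W := Submodule.span ℂ (A '' ((I.erase c : Finset ℤ) : Set ℤ)) with hWdef
  -- find d < c with A d ∉ W
  have hex : ∃ d, d ∈ Set.Ico a c ∧ A d ∉ W := by
    by_contra h
    push_neg at h
    exact hAcW (Submodule.span_le.mpr (by rintro x ⟨d, hd, rfl⟩; exact h d hd) hcspan)
  obtain ⟨d, hd, hAdW⟩ := hex
  have hdE : d ∉ I.erase c := fun hmem => hAdW (Submodule.subset_span ⟨d, hmem, rfl⟩)
  set J : Finset ℤ := insert d (I.erase c) with hJdef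
  have hcII : 1 ≤ I.card := Finset.card_pos.mpr ⟨c, hc⟩
  have hJcard : J.card = k := by
    rw [hJdef, Finset.card_insert_of_notMem hdE, Finset.card_erase_of_mem hc, hcard]
    omega
  have hJcoe : (J : Set ℤ) = insert d ((I.erase c : Finset ℤ) : Set ℤ) := by
    rw [hJdef]; simp
  -- finrank W = k - 1
  have hWrank : finrank ℂ W = I.card - 1 := by
    rw [hWdef, ← card_eq_finrank_span (T := I.erase c) (S := I)
      (by rw [Finset.coe_erase]; exact Set.diff_subset) hind,
      Finset.card_erase_of_mem hc]
  -- span of J is top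
  have hJspan : Submodule.span ℂ (A '' (J : Set ℤ)) = ⊤ := by
    rw [hJcoe, Set.image_insert_eq, Submodule.span_insert, ← hWdef]
    have hlt : W < Submodule.span ℂ {A d} ⊔ W := by
      refine lt_of_le_of_ne le_sup_right (fun he => hAdW ?_)
      rw [he]
      exact Submodule.mem_sup_left (Submodule.mem_span_singleton_self (A d))
    have h1 : finrank ℂ ↥W < finrank ℂ ↥(Submodule.span ℂ {A d} ⊔ W) :=
      Submodule.finrank_lt_finrank_of_lt hlt
    have h2 : finrank ℂ ↥(Submodule.span ℂ {A d} ⊔ W) ≤ k := by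
      have := Submodule.finrank_le (Submodule.span ℂ {A d} ⊔ W : Submodule ℂ (Fin k → ℂ))
      rwa [Module.finrank_fin_fun] at this
    refine Submodule.eq_top_of_finrank_eq ?_
    rw [Module.finrank_fin_fun]
    rw [hWrank, hcard] at h1
    omega
  -- J is a basis
  have hJind : LinearIndependent ℂ (fun j : (J : Set ℤ) => A (j : ℤ)) := by
    refine linearIndependent_of_top_le_span_of_card_eq_finrank ?_ ?_
    · rw [← Set.image_eq_range, hJspan]
    · rw [Module.finrank_fin_fun]
      simpa using hJcard
  have hJsub : J ⊆ Finset.Ico a (a + (n : ℤ)) := by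
    rw [hJdef]
    intro x hx
    rcases Finset.mem_insert.mp hx with rfl | hx
    · have hcIco := Finset.mem_Ico.mp (hsub hc)
      exact Finset.mem_Ico.mpr ⟨hd.1, lt_trans hd.2 hcIco.2⟩
    · exact hsub (Finset.mem_of_mem_erase hx)
  have hgale := hmin J hJsub ⟨hJcard, hJind, hJspan⟩
  -- counting contradiction at t = d + 1
  have hcount := hgale.2 (d + 1)
  have hJfil : (J.filter fun x => d + 1 ≤ x) = (I.filter fun x => d + 1 ≤ x).erase c := by
    rw [hJdef, Finset.filter_insert, if_neg (show ¬ (d + 1 ≤ d) by omega), Finset.filter_erase]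
  have hcfil : c ∈ I.filter fun x => d + 1 ≤ x :=
    Finset.mem_filter.mpr ⟨hc, show d + 1 ≤ c by have := hd.2; omega⟩
  rw [hJfil, Finset.card_erase_of_mem hcfil] at hcount
  have hpos : 1 ≤ (I.filter fun x => d + 1 ≤ x).card := Finset.card_pos.mpr ⟨c, hcfil⟩
  omega

end TwistAux
end Part4

/-- reciprocal minors on the Grassmann necklace: for every
`a`, writing `I→_a = {i 0 ≺_a ⋯ ≺_a i (k-1)}` as a subset of `{a, …, a+n-1}`
(on which `≺_a` is the usual order of `ℤ`), one has
`det(τ→(A)_{i 0}, …, τ→(A)_{i (k-1)}) · det(A_{i 0}, …, A_{i (k-1)}) = 1`. -/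
theorem twist_necklace_minor_reciprocal
    (k n : ℕ) (hk : 1 ≤ k) (hkn : k ≤ n)
    (A : ℤ → Fin k → ℂ) (hper : ColPeriodic k n A) (hrank : FullRank k A)
    (T : ℤ → Fin k → ℂ) (hT : IsRightTwist k n A T)
    (a : ℤ) (Ia : Finset ℤ) (hIa : IsMinBasis k n A a Ia)
    (i : Fin k → ℤ) (hi : StrictMono i)
    (himg : Finset.image i Finset.univ = Ia) :
    Delta k T i * Delta k A i = 1 := by
  classical
  have hn : 0 < n := lt_of_lt_of_le hk hkn
  obtain ⟨hIsub, hIbasis, hImin⟩ := hIa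
  have hmemIa : ∀ s : Fin k, i s ∈ Ia := fun s => by
    rw [← himg]; exact Finset.mem_image.mpr ⟨s, Finset.mem_univ s, rfl⟩
  have key : ∀ r s : Fin k, r ≤ s →
      bil k (T (i r)) (A (i s)) = if s = r then 1 else 0 := by
    intro r s hrs
    have hir : i r ∈ Ia := hmemIa r
    have his : i s ∈ Ia := hmemIa s
    have hars : a ≤ i r := (Finset.mem_Ico.mp (hIsub hir)).1
    have hisn : i s < a + (n : ℤ) := (Finset.mem_Ico.mp (hIsub his)).2
    have hle : i r ≤ i s := hi.monotone hrs
    have hmemG : i s ∈ TwistAux.greedy A n (i r) := by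
      refine TwistAux.mem_greedy.mpr ⟨⟨hle, by linarith⟩, ?_⟩
      intro hmem
      exact TwistAux.minBasis_not_mem_span ⟨hIsub, hIbasis, hImin⟩ his
        (Submodule.span_mono (Set.image_mono
          (fun x hx => Set.mem_Ico.mpr ⟨le_trans hars (Set.mem_Ico.mp hx).1,
            (Set.mem_Ico.mp hx).2⟩)) hmem)
    have h := hT (i r) _ (TwistAux.greedy_isMinBasis hn hper hrank (i r)) (i s) hmemG
    rw [h]
    by_cases hsr : s = r
    · subst hsr; simp
    · rw [if_neg (fun hh => hsr (hi.injective hh)), if_neg hsr]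
  set M : Matrix (Fin k) (Fin k) ℂ :=
    Matrix.of (fun r s : Fin k => bil k (T (i r)) (A (i s))) with hM
  have hdet : M.det = Delta k T i * Delta k A i := by
    have hMeq : M = Matrix.transpose (Matrix.of fun r s : Fin k => T (i s) r) *
        (Matrix.of fun r s : Fin k => A (i s) r) := by
      ext r s
      simp [hM, Matrix.mul_apply, Matrix.transpose_apply, bil]
    rw [hMeq, Matrix.det_mul, Matrix.det_transpose]
    rfl
  have htri : M.BlockTriangular OrderDual.toDual := by
    intro r s h
    have hrs : r < s := h
    have hk2 := key r s (le_of_lt hrs)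
    show bil k (T (i r)) (A (i s)) = 0
    rw [hk2, if_neg (ne_of_gt hrs)]
  have hdiag : ∀ r : Fin k, M r r = 1 := by
    intro r
    have hk2 := key r r (le_refl r)
    show bil k (T (i r)) (A (i r)) = 1
    rw [hk2, if_pos rfl]
  calc Delta k T i * Delta k A i = M.det := hdet.symm
    _ = ∏ r, M r r := Matrix.det_of_lowerTriangular M htri
    _ = 1 := by simp [hdiag]
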